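/- Let A be a DASL on a doset D and let I, J ⊆ D be doset order ideals. Then AI ∩ AJ = A(I ∩ J), where AI denotes the ring ideal generated by I. -/

import Mathlib

/-- Flatten a list of pairs `(α_1,α_2)(α_3,α_4)⋯` into the list `α_1,α_2,α_3,…`. -/
def flat {ι : Type*} (l : List (ι × ι)) : List ι := l.flatMap fun p => [p.1, p.2]

/-- Lexicographic `≤` on sequences of poset elements. -/
def lexLE {ι : Type*} [PartialOrder ι] (a b : List ι) : Prop :=
  a = b ∨ List.Lex (· < ·) a b

/-- The index type of standard monomials of a doset `D`: lists of pairs from `D`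
whose flattened sequence is weakly increasing. -/
def Std {ι : Type*} [PartialOrder ι] (D : Set (ι × ι)) : Type _ :=
  {l : List (ι × ι) // (∀ p ∈ l, p ∈ D) ∧ (flat l).Chain' (· ≤ ·)}

/-- A graded doset algebra with straightening law (DASL) on a doset `D ⊆ ι × ι`
over `B`. -/
structure DASL (B : Type*) [CommRing B] (A : Type*) [CommRing A] [Algebra B A]
    (ι : Type*) [PartialOrder ι] (D : Set (ι × ι))
    (𝒜 : ℕ → Submodule B A) [GradedAlgebra 𝒜] where
  doset_refl : ∀ a : ι, (a, a) ∈ D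
  doset_le : ∀ p ∈ D, p.1 ≤ p.2
  doset_trans : ∀ a b c : ι, a ≤ b → b ≤ c →
    ((a, c) ∈ D ↔ (a, b) ∈ D ∧ (b, c) ∈ D)
  /-- `A_0 = B`. -/
  zero_eq : 𝒜 0 = 1
  /-- The doset elements inside `A`. -/
  emb : ι × ι → A
  /-- Each doset element is homogeneous of positive degree. -/
  homog : ∀ p ∈ D, ∃ d, 0 < d ∧ emb p ∈ 𝒜 d
  /-- The doset generates `A` as a `B`-algebra. -/
  generates : Algebra.adjoin B (emb '' D) = ⊤
  /-- The standard monomials form a free `B`-module basis of `A`. -/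
  bas : Module.Basis (Std D) B A
  bas_eq : ∀ l : Std D, bas l = (l.1.map emb).prod
  /-- Condition (3): each standard monomial `N` appearing in the standard
  representation of a product `M` of doset elements satisfies: every permutation of
  the flattened sequence of `M` is lexicographically ≥ the flattened sequence of `N`. -/
  lex_cond : ∀ m : List (ι × ι), (∀ p ∈ m, p ∈ D) →
    ∀ N : Std D, bas.repr ((m.map emb).prod) N ≠ 0 →
      ∀ l' : List ι, l'.Perm (flat m) → lexLE (flat N.1) l'
  /-- Condition (4): if some permutation of the factors of `M` gives a standard
  monomial, that standard monomial appears with coefficient `±1`. -/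
  coeff_cond : ∀ m : List (ι × ι), (∀ p ∈ m, p ∈ D) →
    ∀ N : Std D, (flat N.1).Perm (flat m) →
      bas.repr ((m.map emb).prod) N = 1 ∨ bas.repr ((m.map emb).prod) N = -1

section Aux

variable {B A ι : Type*} [CommRing B] [CommRing A] [Algebra B A]
    [PartialOrder ι] {D : Set (ι × ι)} {𝒜 : ℕ → Submodule B A} [GradedAlgebra 𝒜]

@[simp] lemma flat_nil : flat ([] : List (ι × ι)) = [] := rfl

@[simp] lemma flat_cons (p : ι × ι) (l : List (ι × ι)) :
    flat (p :: l) = p.1 :: p.2 :: flat l := by simp [flat]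

/-- The empty standard monomial. -/
def emptyStd : Std D := ⟨[], by simp, List.isChain_nil⟩

/-- Standard monomials whose head lies in `I`. -/
def headIn (I : Set (ι × ι)) : Set (Std D) := {N | ∃ q t, N.1 = q :: t ∧ q ∈ I}

lemma lexLE_head_le {a b : ι} {l1 l2 : List ι} (h : lexLE (a :: l1) (b :: l2)) : a ≤ b := by
  rcases h with h | h
  · simp only [List.cons.injEq] at h
    exact h.1.le
  · cases h with
    | cons h => exact le_rfl
    | rel h => exact h.le

variable (dasl : DASL B A ι D 𝒜)

lemma prod_mem_graded : ∀ m : List (ι × ι), (∀ p ∈ m, p ∈ D) →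
    ∃ n, (m.map dasl.emb).prod ∈ 𝒜 n ∧ (m ≠ [] → n ≠ 0)
  | [], _ => ⟨0, by simpa using SetLike.one_mem_graded 𝒜, by simp⟩
  | p :: t, h => by
    obtain ⟨d, hd, hmem⟩ := dasl.homog p (h p (List.mem_cons_self))
    obtain ⟨n, hn, -⟩ := prod_mem_graded t (fun q hq => h q (List.mem_cons_of_mem _ hq))
    exact ⟨d + n, by rw [List.map_cons, List.prod_cons]; exact SetLike.mul_mem_graded hmem hn,
      fun _ => by omega⟩

lemma repr_empty_eq_zero {x : A} {n : ℕ} (hn : n ≠ 0) (hx : x ∈ 𝒜 n) :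
    dasl.bas.repr x emptyStd = 0 := by
  classical
  set f : A →ₗ[B] A := (𝒜 0).subtype.comp
    ((DirectSum.component B ℕ (fun i => ↥(𝒜 i)) 0).comp
      (DirectSum.decomposeAlgEquiv 𝒜).toLinearMap) with hfdef
  have hf : ∀ a : A, f a = ((DirectSum.decompose 𝒜 a) 0 : A) := fun a => rfl
  have hfx : f x = 0 := by
    rw [hf, DirectSum.decompose_of_mem_ne 𝒜 hx hn]
  have hbe : dasl.bas emptyStd = 1 := by
    rw [dasl.bas_eq]
    simp [emptyStd]
  have hf1 : f (1 : A) = 1 := by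
    rw [hf 1, DirectSum.decompose_of_mem_same 𝒜 (SetLike.one_mem_graded 𝒜)]
  have hx' : f x = (dasl.bas.repr x).sum fun N c => c • f (dasl.bas N) := by
    conv_lhs => rw [← dasl.bas.linearCombination_repr x, Finsupp.linearCombination_apply]
    rw [map_finsuppSum]
    exact Finsupp.sum_congr fun N _ => map_smul f _ _
  rw [Finsupp.sum_eq_single emptyStd ?h0 (by simp)] at hx'
  · rw [hbe, hf1, hfx] at hx'
    have h1 : dasl.bas.repr x emptyStd • dasl.bas emptyStd = 0 := by
      rw [hbe, ← hx']
    have := congrArg (fun y => dasl.bas.repr y emptyStd) h1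
    simpa using this
  · intro N _ hNe
    obtain ⟨m, hmem, hne⟩ := prod_mem_graded dasl N.1 N.2.1
    have hN1 : N.1 ≠ [] := fun h => hNe (Subtype.ext h)
    rw [dasl.bas_eq, hf, DirectSum.decompose_of_mem_ne 𝒜 hmem (hne hN1)]
    simp

variable {I : Set (ι × ι)}

lemma mul_bas_mem (hID : I ⊆ D)
    (hIlow : ∀ p ∈ I, ∀ q ∈ D, q.1 ≤ p.1 → q ∈ I)
    {p : ι × ι} (hp : p ∈ I) (M : Std D) :
    dasl.emb p * dasl.bas M ∈ Submodule.span B (dasl.bas '' headIn I) := by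
  classical
  set m : List (ι × ι) := p :: M.1 with hm
  have hmD : ∀ r ∈ m, r ∈ D := by
    intro r hr
    rcases List.mem_cons.mp hr with h | h
    · exact h ▸ hID hp
    · exact M.2.1 r h
  have hxeq : dasl.emb p * dasl.bas M = (m.map dasl.emb).prod := by
    rw [dasl.bas_eq, hm, List.map_cons, List.prod_cons]
  set x : A := (m.map dasl.emb).prod with hxdef
  obtain ⟨n, hmem, hne⟩ := prod_mem_graded dasl m hmD
  have h0 : dasl.bas.repr x emptyStd = 0 :=
    repr_empty_eq_zero dasl (hne (List.cons_ne_nil _ _)) hmem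
  have hrep : x = (dasl.bas.repr x).sum fun N c => c • dasl.bas N := by
    conv_lhs => rw [← dasl.bas.linearCombination_repr x, Finsupp.linearCombination_apply]
  rw [hxeq, hrep]
  apply Submodule.finsuppSum_mem
  intro N hN
  have hNe : N ≠ emptyStd := fun h => hN (h ▸ h0)
  obtain ⟨r, t, hNl⟩ : ∃ r t, N.1 = r :: t := by
    cases hl : N.1 with
    | nil => exact absurd (Subtype.ext hl) hNe
    | cons r t => exact ⟨r, t, rfl⟩
  have hlex := dasl.lex_cond m hmD N hN (flat m) (List.Perm.refl _)
  rw [hNl, flat_cons, hm, flat_cons] at hlex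
  have hr1 : r.1 ≤ p.1 := lexLE_head_le hlex
  have hrD : r ∈ D := N.2.1 r (hNl ▸ List.mem_cons_self)
  have hrI : r ∈ I := hIlow p hp r hrD hr1
  exact Submodule.smul_mem _ _ (Submodule.subset_span ⟨N, ⟨r, t, hNl, hrI⟩, rfl⟩)

lemma mul_mem_span_headIn (hID : I ⊆ D)
    (hIlow : ∀ p ∈ I, ∀ q ∈ D, q.1 ≤ p.1 → q ∈ I)
    {p : ι × ι} (hp : p ∈ I) (z : A) :
    dasl.emb p * z ∈ Submodule.span B (dasl.bas '' headIn I) := by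
  have hz : z ∈ (⊤ : Submodule B A) := trivial
  rw [← dasl.bas.span_eq] at hz
  induction hz using Submodule.span_induction with
  | mem y hy =>
    obtain ⟨M, rfl⟩ := hy
    exact mul_bas_mem dasl hID hIlow hp M
  | zero => rw [mul_zero]; exact zero_mem _
  | add y z _ _ hy hz => rw [mul_add]; exact add_mem hy hz
  | smul c y _ hy => rw [mul_smul_comm]; exact Submodule.smul_mem _ _ hy

lemma ideal_span_le_span_headIn (hID : I ⊆ D)
    (hIlow : ∀ p ∈ I, ∀ q ∈ D, q.1 ≤ p.1 → q ∈ I)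
    {x : A} (hx : x ∈ Ideal.span (dasl.emb '' I)) :
    x ∈ Submodule.span B (dasl.bas '' headIn I) := by
  have key : ∀ a : A, ∀ y ∈ Submodule.span B (dasl.bas '' headIn I),
      a * y ∈ Submodule.span B (dasl.bas '' headIn I) := by
    intro a y hy
    induction hy using Submodule.span_induction with
    | mem y hy =>
      obtain ⟨N, ⟨q, t, hNl, hqI⟩, rfl⟩ := hy
      have : a * dasl.bas N = dasl.emb q * (a * (t.map dasl.emb).prod) := by
        rw [dasl.bas_eq, hNl, List.map_cons, List.prod_cons]
        ring
      rw [this]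
      exact mul_mem_span_headIn dasl hID hIlow hqI _
    | zero => rw [mul_zero]; exact zero_mem _
    | add y z _ _ hy hz => rw [mul_add]; exact add_mem hy hz
    | smul c y _ hy => rw [mul_smul_comm]; exact Submodule.smul_mem _ _ hy
  induction hx using Submodule.span_induction with
  | mem y hy =>
    obtain ⟨p, hpI, rfl⟩ := hy
    simpa using mul_mem_span_headIn dasl hID hIlow hpI 1
  | zero => exact zero_mem _
  | add y z _ _ hy hz => exact add_mem hy hz
  | smul a y _ hy => rw [smul_eq_mul]; exact key a y hy

lemma bas_headIn_mem_ideal {N : Std D} (hN : N ∈ headIn I) :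
    dasl.bas N ∈ Ideal.span (dasl.emb '' I) := by
  obtain ⟨q, t, hNl, hqI⟩ := hN
  rw [dasl.bas_eq, hNl, List.map_cons, List.prod_cons]
  exact Ideal.mul_mem_right _ _ (Ideal.subset_span ⟨q, hqI, rfl⟩)

end Aux

theorem stmt_5 {B A ι : Type*} [CommRing B] [CommRing A] [Algebra B A]
    [PartialOrder ι] (D : Set (ι × ι)) (𝒜 : ℕ → Submodule B A) [GradedAlgebra 𝒜]
    (dasl : DASL B A ι D 𝒜) (I J : Set (ι × ι)) (hID : I ⊆ D) (hJD : J ⊆ D)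
    (hIlow : ∀ p ∈ I, ∀ q ∈ D, q.1 ≤ p.1 → q ∈ I)
    (hJlow : ∀ p ∈ J, ∀ q ∈ D, q.1 ≤ p.1 → q ∈ J) :
    Ideal.span (dasl.emb '' I) ⊓ Ideal.span (dasl.emb '' J) =
      Ideal.span (dasl.emb '' (I ∩ J)) := by
  apply le_antisymm
  · intro x hx
    obtain ⟨h1, h2⟩ := Submodule.mem_inf.mp hx
    have hx1 := ideal_span_le_span_headIn dasl hID hIlow h1
    have hx2 := ideal_span_le_span_headIn dasl hJD hJlow h2
    rw [dasl.bas.mem_span_image] at hx1 hx2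
    have hsub : ((dasl.bas.repr x).support : Set (Std D)) ⊆ headIn (I ∩ J) := by
      intro N hN
      obtain ⟨q, t, hq, hqI⟩ := hx1 hN
      obtain ⟨q', t', hq', hqJ⟩ := hx2 hN
      rw [hq] at hq'
      simp only [List.cons.injEq] at hq'
      exact ⟨q, t, hq, hqI, hq'.1 ▸ hqJ⟩
    have hmem : x ∈ Submodule.span B (dasl.bas '' headIn (I ∩ J)) :=
      dasl.bas.mem_span_image.mpr hsub
    have hle : Submodule.span B (dasl.bas '' headIn (I ∩ J)) ≤
        (Ideal.span (dasl.emb '' (I ∩ J))).restrictScalars B := by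
      rw [Submodule.span_le]
      rintro _ ⟨N, hN, rfl⟩
      exact bas_headIn_mem_ideal dasl hN
    exact hle hmem
  · exact le_inf (Ideal.span_mono (Set.image_mono Set.inter_subset_left))
      (Ideal.span_mono (Set.image_mono Set.inter_subset_right))
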